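/- Assume f is convex and differentiable. Let λ > 0, x, g ∈ ℝⁿ, x⁺ = prox_{λh}(x − λg), and ε = g − ∇f(x), and suppose that for some ν̃ ∈ ℝ one has f(x⁺) ≤ f(x) + ⟨g, x⁺ − x⟩ + (1/(2λ))‖x⁺ − x‖² + ν̃. Then, with F = f + h, for every x* ∈ ℝⁿ: F(x⁺) − F(x*) ≤ ‖ε‖ · ‖x − x*‖ + ν̃ + (1/(2λ))(‖x − x*‖² − ‖x⁺ − x*‖²). -/

import Mathlib

open RealInnerProductSpace

variable {E : Type*} [NormedAddCommGroup E] [InnerProductSpace ℝ E]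

lemma norm_combo (p y u : E) (t : ℝ) :
    ‖((1-t)•p + t•y) - u‖^2
      = (1-t)*‖p-u‖^2 + t*‖y-u‖^2 - (1-t)*t*‖y-p‖^2 := by
  have e : ∀ z : E, ‖z‖^2 = ⟪z,z⟫ := fun z => (real_inner_self_eq_norm_sq z).symm
  rw [e, e, e, e]
  simp only [inner_sub_left, inner_sub_right, inner_add_left, inner_add_right,
    real_inner_smul_left, real_inner_smul_right]
  have c1 := real_inner_comm p y
  have c2 := real_inner_comm p u
  have c3 := real_inner_comm y u
  ring_nf

lemma threept (h : E → ℝ) (hconv : ConvexOn ℝ Set.univ h) (c : ℝ) (hc : 0 < c)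
    (u p : E) (hp : ∀ y, c*‖p-u‖^2 + h p ≤ c*‖y-u‖^2 + h y) (y : E) :
    c*‖p-u‖^2 + h p + c*‖y-p‖^2 ≤ c*‖y-u‖^2 + h y := by
  apply le_of_forall_pos_le_add
  intro δ hδ
  set K := c*‖y-p‖^2 with hK
  have hK0 : 0 ≤ K := by positivity
  set t : ℝ := min 1 (δ/(K+1)) with htdef
  have ht0 : 0 < t := lt_min one_pos (by positivity)
  have ht1 : t ≤ 1 := min_le_left _ _
  have htK : t*K ≤ δ := by
    have h1 : t ≤ δ/(K+1) := min_le_right _ _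
    have h2 : t*(K+1) ≤ δ := by
      rw [← le_div_iff₀ (by positivity)]; exact h1
    nlinarith
  have combo := hp ((1-t)•p + t•y)
  rw [norm_combo] at combo
  have hh : h ((1-t)•p + t•y) ≤ (1-t)*h p + t*h y :=
    hconv.2 (Set.mem_univ p) (Set.mem_univ y) (by linarith) (le_of_lt ht0) (by ring)
  have key : t*(c*‖p-u‖^2 + h p + c*(1-t)*‖y-p‖^2) ≤ t*(c*‖y-u‖^2 + h y) := by
    nlinarith [combo, hh]
  have key2 : c*‖p-u‖^2 + h p + c*(1-t)*‖y-p‖^2 ≤ c*‖y-u‖^2 + h y :=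
    le_of_mul_le_mul_left (by simpa [mul_comm] using key) ht0
  nlinarith [key2, htK]

lemma grad_ineq {n : ℕ} (f : EuclideanSpace ℝ (Fin n) → ℝ)
    (hfconv : ConvexOn ℝ Set.univ f) (hf : Differentiable ℝ f)
    (x y : EuclideanSpace ℝ (Fin n)) :
    f x + ⟪gradient f x, y - x⟫ ≤ f y := by
  set φ : ℝ → ℝ := fun t => f (AffineMap.lineMap x y t) with hφ
  have hφconv : ConvexOn ℝ Set.univ φ := by
    have := hfconv.comp_affineMap (AffineMap.lineMap x y)
    exact this
  have hgrad : ⟪gradient f x, y - x⟫ = fderiv ℝ f x (y - x) := by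
    rw [gradient]
    exact InnerProductSpace.toDual_symm_apply
  have hline : HasDerivAt (fun t : ℝ => AffineMap.lineMap x y t) (y - x) 0 := by
    simp only [AffineMap.lineMap_apply, vsub_eq_sub, vadd_eq_add]
    have : HasDerivAt (fun t : ℝ => t • (y - x)) (y - x) 0 := by
      simpa using (hasDerivAt_id (0:ℝ)).smul_const (y - x)
    simpa using this.add_const x
  have hd : HasDerivAt φ (fderiv ℝ f x (y - x)) 0 := by
    have h0 : (AffineMap.lineMap x y : ℝ → EuclideanSpace ℝ (Fin n)) 0 = x := by simp
    have hfd : HasFDerivAt f (fderiv ℝ f x) ((AffineMap.lineMap x y : ℝ → EuclideanSpace ℝ (Fin n)) 0) := by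
      rw [h0]; exact (hf x).hasFDerivAt
    exact hfd.comp_hasDerivAt 0 hline
  have hslope := hφconv.le_slope_of_hasDerivAt (Set.mem_univ (0:ℝ)) (Set.mem_univ 1)
    one_pos hd
  rw [slope_def_field] at hslope
  have h0 : φ 0 = f x := by simp [hφ]
  have h1 : φ 1 = f y := by simp [hφ]
  rw [h0, h1, show (1:ℝ)-0 = 1 by norm_num, div_one] at hslope
  rw [hgrad]
  linarith

/-- one-step estimate in the convex case. -/
theorem stmt10 {n : ℕ}
    (f h : EuclideanSpace ℝ (Fin n) → ℝ)
    (hconv : ConvexOn ℝ Set.univ h)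
    (hfconv : ConvexOn ℝ Set.univ f)
    (hf : Differentiable ℝ f)
    (prox : ℝ → EuclideanSpace ℝ (Fin n) → EuclideanSpace ℝ (Fin n))
    (hprox : ∀ lam : ℝ, 0 < lam → ∀ u y : EuclideanSpace ℝ (Fin n),
      1 / (2 * lam) * ‖prox lam u - u‖ ^ 2 + h (prox lam u)
        ≤ 1 / (2 * lam) * ‖y - u‖ ^ 2 + h y)
    (lam : ℝ) (hlam : 0 < lam)
    (x g : EuclideanSpace ℝ (Fin n))
    (xp : EuclideanSpace ℝ (Fin n)) (hxp : xp = prox lam (x - lam • g))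
    (ε : EuclideanSpace ℝ (Fin n)) (hε : ε = g - gradient f x)
    (ν : ℝ)
    (hls : f xp ≤ f x + ⟪g, xp - x⟫ + 1 / (2 * lam) * ‖xp - x‖ ^ 2 + ν)
    (F : EuclideanSpace ℝ (Fin n) → ℝ) (hF : ∀ y, F y = f y + h y) :
    ∀ xstar : EuclideanSpace ℝ (Fin n),
      F xp - F xstar ≤ ‖ε‖ * ‖x - xstar‖ + ν
        + 1 / (2 * lam) * (‖x - xstar‖ ^ 2 - ‖xp - xstar‖ ^ 2) := by
  intro xstar
  set c : ℝ := 1 / (2 * lam) with hc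
  have hc0 : 0 < c := by positivity
  set u : EuclideanSpace ℝ (Fin n) := x - lam • g with hu
  -- three point inequality
  have h3 : c*‖xp-u‖^2 + h xp + c*‖xstar-xp‖^2 ≤ c*‖xstar-u‖^2 + h xstar := by
    refine threept h hconv c hc0 u xp (fun y => ?_) xstar
    rw [hxp]; exact hprox lam hlam u y
  -- expand norms
  have e1 : xp - u = (xp - x) + lam • g := by rw [hu]; module
  have e2 : xstar - u = (xstar - x) + lam • g := by rw [hu]; module
  have n1 : ‖xp-u‖^2 = ‖xp-x‖^2 + 2*(lam*⟪g, xp-x⟫) + lam^2*‖g‖^2 := by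
    rw [e1, norm_add_sq_real, norm_smul, real_inner_smul_right, real_inner_comm]
    simp [abs_of_pos hlam]; ring
  have n2 : ‖xstar-u‖^2 = ‖xstar-x‖^2 + 2*(lam*⟪g, xstar-x⟫) + lam^2*‖g‖^2 := by
    rw [e2, norm_add_sq_real, norm_smul, real_inner_smul_right, real_inner_comm]
    simp [abs_of_pos hlam]; ring
  rw [n1, n2] at h3
  -- c * 2 * lam = 1
  have hcl : c * (2*lam) = 1 := by rw [hc]; field_simp
  -- gradient inequality
  have hg := grad_ineq f hfconv hf x xstar
  -- Cauchy-Schwarz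
  have hcs : ⟪ε, xstar - x⟫ ≤ ‖ε‖ * ‖x - xstar‖ := by
    calc ⟪ε, xstar - x⟫ ≤ ‖ε‖ * ‖xstar - x‖ := real_inner_le_norm ε _
    _ = ‖ε‖ * ‖x - xstar‖ := by rw [norm_sub_rev]
  have hεe : ⟪ε, xstar - x⟫ = ⟪g, xstar - x⟫ - ⟪gradient f x, xstar - x⟫ := by
    rw [hε, inner_sub_left]
  have hns1 : ‖xstar - xp‖^2 = ‖xp - xstar‖^2 := by rw [norm_sub_rev]
  have hns2 : ‖xstar - x‖^2 = ‖x - xstar‖^2 := by rw [norm_sub_rev]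
  rw [hns1, hns2] at h3
  rw [hF, hF]
  have hcm : c * (2*(lam*⟪g, xp-x⟫)) = ⟪g, xp-x⟫ := by
    rw [show c * (2*(lam*⟪g, xp-x⟫)) = (c*(2*lam))*⟪g, xp-x⟫ by ring, hcl, one_mul]
  have hcm2 : c * (2*(lam*⟪g, xstar-x⟫)) = ⟪g, xstar-x⟫ := by
    rw [show c * (2*(lam*⟪g, xstar-x⟫)) = (c*(2*lam))*⟪g, xstar-x⟫ by ring, hcl, one_mul]
  nlinarith [h3, hls, hg, hcs, hεe, hcm, hcm2]
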